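/- Let R be a principal ideal domain with field of fractions F, and (G,L) a finite non-degenerate R-network. Then the torsion submodule of Υ(G,L) is isomorphic to U₀(G,L, F/R) = Tor₁^R(Υ(G,L), F/R), and hence Υ(G,L) ≅ R^{|∂V|} ⊕ U₀(G,L, F/R). -/

import Mathlib

open Finsupp

/-- A graph with boundary (`∂`-graph) together with a generalized Laplacian datum over `R`:
oriented edges with a fixed-point-free reversal involution, local finiteness,
a set of boundary vertices, symmetric edge weights `w` and diagonal perturbation `d`. -/
structure DNetwork (R : Type) [CommRing R] where
  V : Type
  E : Type
  src : E → V
  rev : E → E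
  rev_rev : ∀ e, rev (rev e) = e
  rev_ne : ∀ e, rev e ≠ e
  finE : ∀ x : V, Fintype {e : E // src e = x}
  boundary : Set V
  w : E → R
  w_rev : ∀ e, w (rev e) = w e
  d : V → R

namespace DNetwork

variable {R : Type} [CommRing R] (N : DNetwork R)

/-- The endpoint of an oriented edge. -/
def tgt (e : N.E) : N.V := N.src (N.rev e)

/-- The generalized Laplacian evaluated at the vertex `x`, as a linear functional on
`M`-valued functions: `Lu(x) = d(x) u(x) + ∑_{e : e₊ = x} w(e) (u(x) - u(e₋))`. -/
noncomputable def lapAt {M : Type} [AddCommGroup M] [Module R M] (x : N.V) :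
    (N.V → M) →ₗ[R] M :=
  letI := N.finE x
  N.d x • (LinearMap.proj x : (N.V → M) →ₗ[R] M) +
    ∑ e : {e : N.E // N.src e = x},
      N.w e.1 • ((LinearMap.proj x : (N.V → M) →ₗ[R] M) - LinearMap.proj (N.tgt e.1))

/-- The generalized Laplacian applied to the basis chain at the vertex `x`. -/
noncomputable def lapSingle (x : N.V) : N.V →₀ R :=
  letI := N.finE x
  N.d x • Finsupp.single x 1 +
    ∑ e : {e : N.E // N.src e = x},
      N.w e.1 • (Finsupp.single x 1 - Finsupp.single (N.tgt e.1) 1)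

/-- The generalized Laplacian as a linear endomorphism of the module `RV` of `0`-chains. -/
noncomputable def chainLap : (N.V →₀ R) →ₗ[R] (N.V →₀ R) :=
  Finsupp.lsum R fun x => LinearMap.toSpanSingleton R _ (N.lapSingle x)

/-- The set of interior vertices. -/
def interior : Set N.V := N.boundaryᶜ

/-- The submodule `L(RV°)` of `RV`. -/
noncomputable def lapImage : Submodule R (N.V →₀ R) :=
  Submodule.map N.chainLap (Finsupp.supported R R N.interior)

/-- The fundamental module `Υ(G,L) = RV / L(RV°)`. -/
abbrev Upsilon := (N.V →₀ R) ⧸ N.lapImage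

/-- The submodule of `M`-valued harmonic functions `U(G,L,M)`. -/
noncomputable def harmonic (M : Type) [AddCommGroup M] [Module R M] :
    Submodule R (N.V → M) :=
  ⨅ x ∈ N.interior, LinearMap.ker (N.lapAt (M := M) x)

/-- The module `U₀(G,L,M)` of finitely supported `M`-valued functions `u` with
`u = 0` on the boundary and `Lu ≡ 0` everywhere. -/
noncomputable def U0 (M : Type) [AddCommGroup M] [Module R M] :
    Submodule R (N.V →₀ M) :=
  (⨅ x ∈ N.boundary, LinearMap.ker (Finsupp.lapply (M := M) (R := R) x)) ⊓
    (⨅ x : N.V, LinearMap.ker ((N.lapAt (M := M) x).comp Finsupp.lcoeFun))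

/-- Adjacency via an oriented edge. -/
def Adj (x y : N.V) : Prop := ∃ e : N.E, N.src e = x ∧ N.tgt e = y

/-- Connectivity of the underlying graph. -/
def Connected : Prop := ∀ x y : N.V, Relation.ReflTransGen N.Adj x y

end DNetwork

namespace DNetwork

open Finsupp Submodule

variable {R : Type} [CommRing R] (N : DNetwork R) [Fintype N.V]

lemma tgt_rev (e : N.E) : N.tgt (N.rev e) = N.src e := by
  simp [tgt, N.rev_rev]

lemma src_rev (e : N.E) : N.src (N.rev e) = N.tgt e := rfl

/-- The matrix of the Laplacian is symmetric. -/
lemma lapSingle_symm (x y : N.V) : N.lapSingle x y = N.lapSingle y x := by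
  classical
  rcases eq_or_ne x y with rfl | hxy
  · rfl
  · letI := N.finE x; letI := N.finE y
    have hx : ∀ (a b : N.V), a ≠ b →
        (letI := N.finE a; N.lapSingle a b
          = ∑ e : {e // N.src e = a}, (if N.tgt e.1 = b then -N.w e.1 else 0)) := by
      intro a b hab
      letI := N.finE a
      simp only [lapSingle, Finsupp.add_apply, Finsupp.smul_apply, Finsupp.finset_sum_apply,
        Finsupp.sub_apply, Finsupp.single_apply, if_neg hab, smul_eq_mul, mul_zero, zero_add,
        zero_sub, mul_neg, mul_ite, mul_one]
      congr 1
      ext e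
      split <;> simp
    rw [hx x y hxy, hx y x (Ne.symm hxy), ← Finset.sum_filter, ← Finset.sum_filter]
    have key : ∀ (a : {e // N.src e = x}), N.tgt a.1 = y → N.src (N.rev a.1) = y :=
      fun a ha => (N.src_rev a.1).trans ha
    have key' : ∀ (a : {e // N.src e = y}), N.tgt a.1 = x → N.src (N.rev a.1) = x :=
      fun a ha => (N.src_rev a.1).trans ha
    refine Finset.sum_bij'
      (i := fun a ha => ⟨N.rev a.1, key a (by simpa using ha)⟩)
      (j := fun a ha => ⟨N.rev a.1, key' a (by simpa using ha)⟩) ?_ ?_ ?_ ?_ ?_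
    · intro a ha
      simp [N.tgt_rev, a.2]
    · intro a ha
      simp [N.tgt_rev, a.2]
    · intro a ha
      exact Subtype.ext (N.rev_rev a.1)
    · intro a ha
      exact Subtype.ext (N.rev_rev a.1)
    · intro a ha
      rw [N.w_rev]

/-- The Laplacian acting on `M`-valued functions via the matrix `lapSingle`. -/
noncomputable def lapFun {M : Type} [AddCommGroup M] [Module R M] (u : N.V → M) (x : N.V) : M :=
  ∑ y, N.lapSingle x y • u y

lemma sum_smul_eq_linearCombination {M : Type} [AddCommGroup M] [Module R M]
    (u : N.V → M) (f : N.V →₀ R) :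
    ∑ y, f y • u y = Finsupp.linearCombination R u f := by
  rw [Finsupp.linearCombination_apply, Finsupp.sum_fintype]
  intro y; simp

lemma lapAt_eq_lapFun {M : Type} [AddCommGroup M] [Module R M] (x : N.V) (u : N.V → M) :
    N.lapAt x u = N.lapFun u x := by
  classical
  letI := N.finE x
  rw [lapFun]
  conv_lhs => rw [lapAt]
  rw [sum_smul_eq_linearCombination, lapSingle]
  simp only [map_add, map_smul, map_sum, map_sub, Finsupp.linearCombination_single, one_smul,
    LinearMap.add_apply, LinearMap.smul_apply, LinearMap.sum_apply, LinearMap.sub_apply,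
    LinearMap.proj_apply]

lemma chainLap_apply (u : N.V →₀ R) (y : N.V) :
    N.chainLap u y = N.lapFun (⇑u) y := by
  classical
  rw [chainLap, Finsupp.lsum_apply]
  rw [Finsupp.sum_apply]
  rw [Finsupp.sum_fintype]
  · rw [lapFun]
    apply Finset.sum_congr rfl
    intro x _
    rw [LinearMap.toSpanSingleton_apply, Finsupp.smul_apply, smul_eq_mul, smul_eq_mul,
      mul_comm, N.lapSingle_symm x y]
  · intro x; simp

lemma mem_U0_iff {M : Type} [AddCommGroup M] [Module R M] (u : N.V →₀ M) :
    u ∈ N.U0 M ↔ (∀ x ∈ N.boundary, u x = 0) ∧ ∀ x, N.lapFun (⇑u) x = 0 := by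
  simp only [U0, Submodule.mem_inf, Submodule.mem_iInf, LinearMap.mem_ker,
    Finsupp.lapply_apply, LinearMap.comp_apply]
  refine and_congr Iff.rfl (forall_congr' fun x => ?_)
  rw [show (Finsupp.lcoeFun u : N.V → M) = ⇑u from rfl, lapAt_eq_lapFun]

lemma mem_lapImage_iff (v : N.V →₀ R) :
    v ∈ N.lapImage ↔ ∃ w : N.V → R,
      (∀ x ∈ N.boundary, w x = 0) ∧ ∀ y, N.lapFun w y = v y := by
  rw [lapImage, Submodule.mem_map]
  constructor
  · rintro ⟨w₀, hw₀, rfl⟩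
    refine ⟨⇑w₀, fun x hx => ?_, fun y => (N.chainLap_apply w₀ y).symm⟩
    exact (Finsupp.mem_supported' _ _).mp hw₀ x (by simp [interior, hx])
  · rintro ⟨w, hwb, hwl⟩
    refine ⟨(Finsupp.linearEquivFunOnFinite R R N.V).symm w, ?_, ?_⟩
    · rw [Finsupp.mem_supported']
      intro x hx
      have hxb : x ∈ N.boundary := by
        by_contra hc
        exact hx (by simpa [interior] using hc)
      simpa [Finsupp.linearEquivFunOnFinite] using hwb x hxb
    · ext y
      rw [N.chainLap_apply]
      have hcoe : ⇑((Finsupp.linearEquivFunOnFinite R R N.V).symm w) = w :=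
        Finsupp.equivFunOnFinite.apply_symm_apply w
      rw [hcoe]
      exact hwl y

/-- Linearity lemmas for `lapFun`. -/
lemma lapFun_add {M : Type} [AddCommGroup M] [Module R M] (u v : N.V → M) (x : N.V) :
    N.lapFun (u + v) x = N.lapFun u x + N.lapFun v x := by
  simp [lapFun, smul_add, Finset.sum_add_distrib]

lemma lapFun_sub {M : Type} [AddCommGroup M] [Module R M] (u v : N.V → M) (x : N.V) :
    N.lapFun (u - v) x = N.lapFun u x - N.lapFun v x := by
  simp [lapFun, smul_sub, Finset.sum_sub_distrib]

lemma lapFun_smul {M : Type} [AddCommGroup M] [Module R M] (r : R) (u : N.V → M) (x : N.V) :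
    N.lapFun (fun y => r • u y) x = r • N.lapFun u x := by
  simp only [lapFun, Finset.smul_sum, smul_comm r]

lemma lapFun_map {M M' : Type} [AddCommGroup M] [Module R M] [AddCommGroup M'] [Module R M']
    (g : M →ₗ[R] M') (u : N.V → M) (x : N.V) :
    N.lapFun (fun y => g (u y)) x = g (N.lapFun u x) := by
  simp [lapFun, map_sum, map_smul]

lemma lapFun_mul {c : FractionRing R} (u : N.V → FractionRing R) (x : N.V) :
    N.lapFun (fun y => c * u y) x = c * N.lapFun u x := by
  simp only [lapFun, Finset.mul_sum, mul_smul_comm]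

/-- `F/R` as an `R`-module. -/
abbrev Qmod (R : Type) [CommRing R] : Type :=
  FractionRing R ⧸ LinearMap.range (Algebra.linearMap R (FractionRing R))

/-- The projection `R^V → Υ`, with functions instead of finsupps. -/
noncomputable def mkUp : (N.V → R) →ₗ[R] N.Upsilon :=
  N.lapImage.mkQ ∘ₗ ((Finsupp.linearEquivFunOnFinite R R N.V).symm : (N.V → R) →ₗ[R] _)

lemma mkUp_eq_zero_iff (v : N.V → R) :
    N.mkUp v = 0 ↔ ∃ w : N.V → R, (∀ x ∈ N.boundary, w x = 0) ∧ ∀ y, N.lapFun w y = v y := by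
  rw [mkUp, LinearMap.comp_apply]
  rw [show ∀ z : N.V →₀ R, N.lapImage.mkQ z = Submodule.Quotient.mk z from fun _ => rfl]
  rw [Submodule.Quotient.mk_eq_zero, mem_lapImage_iff]
  have hcoe : ∀ y, ((Finsupp.linearEquivFunOnFinite R R N.V).symm v) y = v y := fun y =>
    congrFun (Finsupp.equivFunOnFinite.apply_symm_apply v) y
  constructor
  · rintro ⟨w, h1, h2⟩; exact ⟨w, h1, fun y => (h2 y).trans (hcoe y)⟩
  · rintro ⟨w, h1, h2⟩; exact ⟨w, h1, fun y => (h2 y).trans (hcoe y).symm⟩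

lemma mkUp_surjective : Function.Surjective N.mkUp := by
  intro z
  obtain ⟨f, rfl⟩ := N.lapImage.mkQ_surjective z
  refine ⟨⇑f, ?_⟩
  rw [mkUp, LinearMap.comp_apply]
  congr 1
  exact Finsupp.equivFunOnFinite_symm_coe f

/-- Non-degeneracy: the homogeneous system has no nonzero `R`-valued solution
vanishing on the boundary. -/
lemma eq_zero_of_lapFun (hnd : N.U0 R = ⊥) (w : N.V → R)
    (hb : ∀ x ∈ N.boundary, w x = 0) (hl : ∀ x, N.lapFun w x = 0) : w = 0 := by
  have hcoe : ⇑(Finsupp.equivFunOnFinite.symm w) = w := Finsupp.equivFunOnFinite.apply_symm_apply w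
  have hmem : (Finsupp.equivFunOnFinite.symm w) ∈ N.U0 R := by
    rw [mem_U0_iff, hcoe]
    exact ⟨hb, hl⟩
  rw [hnd, Submodule.mem_bot] at hmem
  rw [← hcoe, hmem]
  rfl

/-- Non-degeneracy over the fraction field. -/
lemma eq_zero_of_lapFun_frac (hnd : N.U0 R = ⊥) [IsDomain R] (u : N.V → FractionRing R)
    (hb : ∀ x ∈ N.boundary, u x = 0) (hl : ∀ x, N.lapFun u x = 0) : u = 0 := by
  obtain ⟨r, hr⟩ := IsLocalization.exist_integer_multiples_of_finite (nonZeroDivisors R) u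
  have hr' : ∀ x, ∃ b : R, algebraMap R (FractionRing R) b = (r : R) • u x := fun x => hr x
  choose a ha using hr'
  have hinj := IsFractionRing.injective R (FractionRing R)
  have hab : ∀ x ∈ N.boundary, a x = 0 := by
    intro x hx
    apply hinj
    rw [ha x, hb x hx, smul_zero, map_zero]
  have hal : ∀ x, N.lapFun a x = 0 := by
    intro x
    apply hinj
    rw [map_zero, show (algebraMap R (FractionRing R)) (N.lapFun a x)
        = (Algebra.linearMap R (FractionRing R)) (N.lapFun a x) from rfl,
      ← N.lapFun_map (Algebra.linearMap R (FractionRing R)) a x]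
    have : (fun y => (Algebra.linearMap R (FractionRing R)) (a y))
        = fun y => (r : R) • u y := by
      funext y; exact ha y
    rw [this, N.lapFun_smul, hl x, smul_zero]
  have ha0 : a = 0 := N.eq_zero_of_lapFun hnd a hab hal
  funext x
  have : (r : R) • u x = 0 := by rw [← ha x, ha0]; simp
  rw [Algebra.smul_def] at this
  rcases mul_eq_zero.mp this with h | h
  · exact absurd h (IsFractionRing.to_map_ne_zero_of_mem_nonZeroDivisors r.2)
  · exact h

/-- A lift datum for an element of `U₀(F/R)`. -/
def LiftOK (ub : N.V →₀ Qmod R) (u : N.V → FractionRing R) (v : N.V → R) : Prop :=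
  (∀ x ∈ N.boundary, u x = 0) ∧
  (∀ x, Submodule.Quotient.mk (u x) = ub x) ∧
  (∀ x, algebraMap R (FractionRing R) (v x) = N.lapFun u x)

lemma liftOK_exists (ub : N.V →₀ Qmod R) (hub : ub ∈ N.U0 (Qmod R)) :
    ∃ u v, N.LiftOK ub u v := by
  classical
  rw [mem_U0_iff] at hub
  obtain ⟨hbd, hlap⟩ := hub
  have hsurj := (LinearMap.range (Algebra.linearMap R (FractionRing R))).mkQ_surjective
  choose lift hlift using hsurj
  set u : N.V → FractionRing R := fun x => if x ∈ N.boundary then 0 else lift (ub x) with hu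
  have hu0 : ∀ x ∈ N.boundary, u x = 0 := fun x hx => by simp [hu, hx]
  have huq : ∀ x, Submodule.Quotient.mk (u x) = ub x := by
    intro x
    by_cases hx : x ∈ N.boundary
    · rw [hu]; simp only [hx, if_true]
      rw [show (Submodule.Quotient.mk (0 : FractionRing R) :
        Qmod R) = 0 from rfl, hbd x hx]
    · rw [hu]; simp only [hx, if_false]
      exact hlift (ub x)
  have hker : ∀ x, ∃ b : R, algebraMap R (FractionRing R) b = N.lapFun u x := by
    intro x
    have h1 : Submodule.Quotient.mk (N.lapFun u x) = (0 : Qmod R) := by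
      rw [show (Submodule.Quotient.mk (N.lapFun u x) : Qmod R)
          = (LinearMap.range (Algebra.linearMap R (FractionRing R))).mkQ (N.lapFun u x) from rfl,
        ← N.lapFun_map ((LinearMap.range (Algebra.linearMap R (FractionRing R))).mkQ) u x]
      have : (fun y => (LinearMap.range (Algebra.linearMap R (FractionRing R))).mkQ (u y))
          = ⇑ub := by funext y; exact huq y
      rw [this]
      exact hlap x
    rw [Submodule.Quotient.mk_eq_zero] at h1
    exact h1
  choose v hv using hker
  exact ⟨u, v, hu0, huq, hv⟩

lemma liftOK_welldef {ub : N.V →₀ Qmod R} {u u' : N.V → FractionRing R} {v v' : N.V → R}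
    (h : N.LiftOK ub u v) (h' : N.LiftOK ub u' v') : N.mkUp v = N.mkUp v' := by
  obtain ⟨hb, hq, hv⟩ := h
  obtain ⟨hb', hq', hv'⟩ := h'
  have hinj := IsFractionRing.injective R (FractionRing R)
  have hdiff : ∀ x, ∃ b : R, algebraMap R (FractionRing R) b = u x - u' x := by
    intro x
    have : Submodule.Quotient.mk (u x - u' x) = (0 : Qmod R) := by
      rw [Submodule.Quotient.mk_sub, hq x, hq' x, sub_self]
    rw [Submodule.Quotient.mk_eq_zero] at this
    exact this
  choose w hw using hdiff
  have hwb : ∀ x ∈ N.boundary, w x = 0 := by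
    intro x hx
    apply hinj
    rw [hw x, hb x hx, hb' x hx, sub_zero, map_zero]
  have hwl : ∀ y, N.lapFun w y = v y - v' y := by
    intro y
    apply hinj
    rw [map_sub, hv y, hv' y,
      show (algebraMap R (FractionRing R)) (N.lapFun w y)
        = (Algebra.linearMap R (FractionRing R)) (N.lapFun w y) from rfl,
      ← N.lapFun_map (Algebra.linearMap R (FractionRing R)) w y]
    have : (fun t => (Algebra.linearMap R (FractionRing R)) (w t)) = u - u' := by
      funext t; exact hw t
    rw [this, N.lapFun_sub]
  have hz : N.mkUp (v - v') = 0 :=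
    (N.mkUp_eq_zero_iff _).mpr ⟨w, hwb, fun y => by rw [hwl y]; rfl⟩
  rw [map_sub, sub_eq_zero] at hz
  exact hz

end DNetwork

set_option maxHeartbeats 2000000 in
/-- over a PID `R` with fraction field `F`, for a finite non-degenerate network,
the torsion submodule of `Υ(G,L)` is isomorphic to `U₀(G,L,F/R)`, and hence
`Υ(G,L) ≅ R^{|∂V|} ⊕ U₀(G,L,F/R)`. -/
theorem upsilon_torsion_iso_u0_fraction_quotient
    {R : Type} [CommRing R] [IsDomain R] [IsPrincipalIdealRing R]
    (N : DNetwork R) [Fintype N.V]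
    (hnd : N.U0 R = ⊥) :
    Nonempty (↥(Submodule.torsion R N.Upsilon) ≃ₗ[R]
        ↥(N.U0 (FractionRing R ⧸ LinearMap.range (Algebra.linearMap R (FractionRing R))))) ∧
      Nonempty (N.Upsilon ≃ₗ[R]
        ((Fin (Nat.card N.boundary) → R) ×
          ↥(N.U0 (FractionRing R ⧸ LinearMap.range (Algebra.linearMap R (FractionRing R)))))) := by
  classical
  have hinjF := IsFractionRing.injective R (FractionRing R)
  -- construct the map Φ : U₀(F/R) → Υ via lifts
  have hex : ∀ ub : ↥(N.U0 (DNetwork.Qmod R)), ∃ u v, N.LiftOK ub.1 u v :=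
    fun ub => N.liftOK_exists ub.1 ub.2
  choose uf vf hLift using hex
  have φ_eq : ∀ (ub : ↥(N.U0 (DNetwork.Qmod R))) u v, N.LiftOK ub.1 u v →
      N.mkUp (vf ub) = N.mkUp v := fun ub u v h => N.liftOK_welldef (hLift ub) h
  set Φ : ↥(N.U0 (DNetwork.Qmod R)) →ₗ[R] N.Upsilon :=
    { toFun := fun ub => N.mkUp (vf ub)
      map_add' := by
        intro a b
        obtain ⟨h1, h2, h3⟩ := hLift a
        obtain ⟨g1, g2, g3⟩ := hLift b
        have h : N.LiftOK (↑(a + b)) (uf a + uf b) (vf a + vf b) := by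
          refine ⟨fun x hx => by simp [h1 x hx, g1 x hx], fun x => ?_, fun x => ?_⟩
          · rw [Pi.add_apply, Submodule.Quotient.mk_add, h2 x, g2 x]
            rfl
          · rw [Pi.add_apply, map_add, h3 x, g3 x, N.lapFun_add]
        show N.mkUp (vf (a + b)) = N.mkUp (vf a) + N.mkUp (vf b)
        rw [φ_eq (a + b) _ _ h, map_add]
      map_smul' := by
        intro r a
        obtain ⟨h1, h2, h3⟩ := hLift a
        have h : N.LiftOK (↑(r • a)) (fun y => r • uf a y) (r • vf a) := by
          refine ⟨fun x hx => by simp [h1 x hx], fun x => ?_, fun x => ?_⟩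
          · rw [Submodule.Quotient.mk_smul, h2 x]
            rfl
          · rw [Pi.smul_apply, smul_eq_mul, map_mul, h3 x, N.lapFun_smul,
              Algebra.smul_def]
        show N.mkUp (vf (r • a)) = r • N.mkUp (vf a)
        rw [φ_eq (r • a) _ _ h, map_smul] }
  have hΦ : ∀ ub, Φ ub = N.mkUp (vf ub) := fun _ => rfl
  -- injectivity
  have hinj : Function.Injective Φ := by
    rw [injective_iff_map_eq_zero]
    intro a ha
    rw [hΦ, N.mkUp_eq_zero_iff] at ha
    obtain ⟨w, hwb, hwl⟩ := ha
    obtain ⟨h1, h2, h3⟩ := hLift a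
    have hu' : (fun x => uf a x - algebraMap R (FractionRing R) (w x)) = 0 := by
      apply N.eq_zero_of_lapFun_frac hnd
      · intro x hx
        rw [h1 x hx, hwb x hx, map_zero, sub_zero]
      · intro x
        have e1 : N.lapFun (fun y => uf a y - algebraMap R (FractionRing R) (w y)) x
            = N.lapFun (uf a) x - N.lapFun (fun y => algebraMap R (FractionRing R) (w y)) x := by
          rw [← N.lapFun_sub]; rfl
        rw [e1, show N.lapFun (fun y => algebraMap R (FractionRing R) (w y)) x
            = algebraMap R (FractionRing R) (N.lapFun w x) from
            N.lapFun_map (Algebra.linearMap R (FractionRing R)) w x,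
          hwl x, ← h3 x, sub_self]
    apply Subtype.ext
    apply Finsupp.ext
    intro x
    have : uf a x = algebraMap R (FractionRing R) (w x) := by
      have := congrFun hu' x
      simpa [sub_eq_zero] using this
    have hz : (↑a : N.V →₀ DNetwork.Qmod R) x = 0 := by
      rw [← h2 x, this, Submodule.Quotient.mk_eq_zero]
      exact ⟨w x, rfl⟩
    simpa using hz
  -- range lands in the torsion submodule
  have hmem : ∀ ub, Φ ub ∈ Submodule.torsion R N.Upsilon := by
    intro a
    obtain ⟨h1, h2, h3⟩ := hLift a
    obtain ⟨r, hr⟩ := IsLocalization.exist_integer_multiples_of_finite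
      (nonZeroDivisors R) (uf a)
    have hr' : ∀ x, ∃ b : R, algebraMap R (FractionRing R) b = (r : R) • uf a x :=
      fun x => hr x
    choose w hw using hr'
    refine ⟨r, ?_⟩
    have hz : N.mkUp ((r : R) • vf a) = 0 := by
      rw [N.mkUp_eq_zero_iff]
      refine ⟨w, fun x hx => ?_, fun y => ?_⟩
      · apply hinjF
        rw [hw x, h1 x hx, smul_zero, map_zero]
      · apply hinjF
        rw [show (algebraMap R (FractionRing R)) (N.lapFun w y)
            = (Algebra.linearMap R (FractionRing R)) (N.lapFun w y) from rfl,
          ← N.lapFun_map (Algebra.linearMap R (FractionRing R)) w y]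
        have hfun : (fun t => (Algebra.linearMap R (FractionRing R)) (w t))
            = fun t => (r : R) • uf a t := by funext t; exact hw t
        rw [hfun, N.lapFun_smul, ← h3 y]
        rw [Pi.smul_apply, smul_eq_mul, map_mul, Algebra.smul_def]
    rw [Submonoid.smul_def, hΦ, ← map_smul] at *
    exact hz
  -- surjectivity onto the torsion submodule
  have hsurj : ∀ t : N.Upsilon, t ∈ Submodule.torsion R N.Upsilon → ∃ a, Φ a = t := by
    intro t ht
    obtain ⟨v, rfl⟩ := N.mkUp_surjective t
    obtain ⟨r, hr⟩ := ht
    rw [Submonoid.smul_def, ← map_smul] at hr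
    rw [N.mkUp_eq_zero_iff] at hr
    obtain ⟨w, hwb, hwl⟩ := hr
    set rF := algebraMap R (FractionRing R) (r : R) with hrF
    have hrF0 : rF ≠ 0 := IsFractionRing.to_map_ne_zero_of_mem_nonZeroDivisors r.2
    set u : N.V → FractionRing R := fun x => rF⁻¹ * algebraMap R (FractionRing R) (w x)
      with hu
    have hub : ∀ x ∈ N.boundary, u x = 0 := by
      intro x hx
      rw [hu]; simp only [hwb x hx, map_zero, mul_zero]
    have hlapu : ∀ x, algebraMap R (FractionRing R) (v x) = N.lapFun u x := by
      intro x
      rw [hu]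
      rw [show N.lapFun (fun y => rF⁻¹ * algebraMap R (FractionRing R) (w y)) x
          = rF⁻¹ * N.lapFun (fun y => algebraMap R (FractionRing R) (w y)) x from
          N.lapFun_mul _ x]
      rw [show N.lapFun (fun y => algebraMap R (FractionRing R) (w y)) x
          = algebraMap R (FractionRing R) (N.lapFun w x) from
          N.lapFun_map (Algebra.linearMap R (FractionRing R)) w x]
      rw [hwl x]
      rw [Pi.smul_apply, smul_eq_mul, map_mul, ← hrF]
      rw [inv_mul_cancel_left₀ hrF0]
    set π := (LinearMap.range (Algebra.linearMap R (FractionRing R))).mkQ with hπ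
    set ubf : N.V →₀ DNetwork.Qmod R :=
      Finsupp.equivFunOnFinite.symm (fun x => π (u x)) with hubf
    have hcoe : ⇑ubf = fun x => π (u x) :=
      (Finsupp.equivFunOnFinite (M := DNetwork.Qmod R)).apply_symm_apply _
    have hub0 : ubf ∈ N.U0 (DNetwork.Qmod R) := by
      rw [DNetwork.mem_U0_iff]
      constructor
      · intro x hx
        rw [show ubf x = π (u x) from congrFun hcoe x, hub x hx, map_zero]
      · intro x
        rw [hcoe]
        rw [show N.lapFun (fun y => π (u y)) x = π (N.lapFun u x) from
            N.lapFun_map π u x]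
        rw [← hlapu x]
        rw [hπ, Submodule.mkQ_apply,
          show (Submodule.Quotient.mk (algebraMap R (FractionRing R) (v x)) :
            DNetwork.Qmod R) = 0 from (Submodule.Quotient.mk_eq_zero _).mpr ⟨v x, rfl⟩]
    refine ⟨⟨ubf, hub0⟩, ?_⟩
    rw [hΦ]
    refine φ_eq _ u v ⟨hub, fun x => ?_, hlapu⟩
    rw [show (↑(⟨ubf, hub0⟩ : ↥(N.U0 (DNetwork.Qmod R))) : N.V →₀ DNetwork.Qmod R) x
      = π (u x) from congrFun hcoe x]
    rfl
  -- the first equivalence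
  have e1 : ↥(N.U0 (DNetwork.Qmod R)) ≃ₗ[R] ↥(Submodule.torsion R N.Upsilon) := by
    refine LinearEquiv.ofBijective (Φ.codRestrict _ hmem) ⟨?_, ?_⟩
    · intro a b hab
      exact hinj (Subtype.ext_iff.mp hab)
    · rintro ⟨t, ht⟩
      obtain ⟨a, ha⟩ := hsurj t ht
      exact ⟨a, Subtype.ext ha⟩
  refine ⟨⟨e1.symm⟩, ?_⟩
  -- Part 2: splitting off the torsion and counting the free rank
  haveI : Module.Finite R (N.V →₀ R) :=
    Module.Finite.equiv (Finsupp.linearEquivFunOnFinite R R N.V).symm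
  haveI : Module.Finite R N.Upsilon :=
    Module.Finite.of_surjective _ N.lapImage.mkQ_surjective
  set T := Submodule.torsion R N.Upsilon with hTdef
  haveI : Module.Finite R (N.Upsilon ⧸ T) :=
    Module.Finite.of_surjective _ T.mkQ_surjective
  haveI hfree : Module.Free R (N.Upsilon ⧸ T) := by
    rw [hTdef]
    exact Module.free_of_finite_type_torsion_free'
  -- a splitting of the projection onto the free quotient
  obtain ⟨sec, hsec⟩ :=
    Module.projective_lifting_property T.mkQ LinearMap.id T.mkQ_surjective
  have hsec' : ∀ z, T.mkQ (sec z) = z := fun z => LinearMap.congr_fun hsec z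
  have hker : ∀ z : N.Upsilon, z - sec (T.mkQ z) ∈ T := by
    intro z
    have hz : T.mkQ (z - sec (T.mkQ z)) = 0 := by
      rw [map_sub, hsec' (T.mkQ z), sub_self]
    rw [Submodule.mkQ_apply, Submodule.Quotient.mk_eq_zero] at hz
    exact hz
  set f : N.Upsilon →ₗ[R] (N.Upsilon ⧸ T) × ↥T :=
    LinearMap.prod T.mkQ ((LinearMap.id - sec ∘ₗ T.mkQ).codRestrict T hker) with hfdef
  set g : ((N.Upsilon ⧸ T) × ↥T) →ₗ[R] N.Upsilon :=
    sec ∘ₗ LinearMap.fst R _ _ + T.subtype ∘ₗ LinearMap.snd R _ _ with hgdef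
  have hfg : f ∘ₗ g = LinearMap.id := by
    apply LinearMap.ext
    rintro ⟨p, t⟩
    have ht : T.mkQ ↑t = 0 := (Submodule.Quotient.mk_eq_zero _).mpr t.2
    have h1 : T.mkQ (sec p + ↑t) = p := by
      rw [map_add, hsec' p, ht, add_zero]
    apply Prod.ext
    · simpa [hfdef, hgdef] using h1
    · apply Subtype.ext
      simp only [hfdef, hgdef, LinearMap.comp_apply, LinearMap.prod_apply, Function.prod,
        LinearMap.add_apply, LinearMap.fst_apply, LinearMap.snd_apply,
        LinearMap.codRestrict_apply, LinearMap.sub_apply, LinearMap.id_apply,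
        Submodule.coe_subtype]
      rw [h1]
      abel
  have hgf : g ∘ₗ f = LinearMap.id := by
    apply LinearMap.ext
    intro z
    simp only [hfdef, hgdef, LinearMap.comp_apply, LinearMap.prod_apply, Function.prod,
      LinearMap.add_apply, LinearMap.fst_apply, LinearMap.snd_apply,
      LinearMap.codRestrict_apply, LinearMap.sub_apply, LinearMap.id_apply,
      Submodule.coe_subtype]
    abel
  have e2 : N.Upsilon ≃ₗ[R] (N.Upsilon ⧸ T) × ↥T := LinearEquiv.ofLinear f g hfg hgf
  -- rank computation
  haveI : Fintype ↥N.interior := Fintype.ofFinite _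
  haveI : Fintype ↥N.boundary := Fintype.ofFinite _
  have h1 : Module.rank R (N.Upsilon ⧸ T) = Module.rank R N.Upsilon :=
    rank_quotient_eq_of_le_torsion (le_of_eq hTdef)
  have h2 := Submodule.rank_quotient_add_rank N.lapImage
  -- the image of the Laplacian is free of rank the number of interior vertices
  have h3 : Module.rank R ↥N.lapImage = (Fintype.card ↥N.interior : Cardinal) := by
    set φIm : ↥(Finsupp.supported R R N.interior) →ₗ[R] (N.V →₀ R) :=
      N.chainLap ∘ₗ (Finsupp.supported R R N.interior).subtype with hφIm
    have hrange : LinearMap.range φIm = N.lapImage := by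
      rw [hφIm, LinearMap.range_comp, Submodule.range_subtype]
      rfl
    have hinjIm : Function.Injective φIm := by
      suffices hz : ∀ c, φIm c = 0 → c = 0 by
        intro a b hab
        rw [← sub_eq_zero]
        apply hz
        have := φIm.map_sub a b
        rw [this, hab, sub_self]
      rintro ⟨w, hw⟩ hmemker
      have hcl : N.chainLap w = 0 := hmemker
      have hwU : w ∈ N.U0 R := by
        rw [DNetwork.mem_U0_iff]
        constructor
        · intro x hx
          exact (Finsupp.mem_supported' _ _).mp hw x (by simp [DNetwork.interior, hx])
        · intro x
          rw [← N.chainLap_apply, hcl]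
          rfl
      rw [hnd, Submodule.mem_bot] at hwU
      exact Subtype.ext hwU
    have eIm : ↥(Finsupp.supported R R N.interior) ≃ₗ[R] ↥N.lapImage :=
      (LinearEquiv.ofInjective φIm hinjIm).trans (LinearEquiv.ofEq _ _ hrange)
    have eSup : (↥(Finsupp.supported R R N.interior)) ≃ₗ[R] (↥N.interior →₀ R) :=
      Finsupp.supportedEquivFinsupp N.interior
    have hsup : Module.rank R ↥(Finsupp.supported R R N.interior)
        = (Fintype.card ↥N.interior : Cardinal) := by
      rw [LinearEquiv.rank_eq (R := R) (M := ↥(Finsupp.supported R R N.interior))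
        (M₁ := (↥N.interior →₀ R)) eSup, rank_finsupp_self', Cardinal.mk_fintype]
    rw [← hsup]
    exact LinearEquiv.rank_eq (R := R) (M := ↥N.lapImage)
      (M₁ := ↥(Finsupp.supported R R N.interior)) eIm.symm
  have h4 : Module.rank R (N.V →₀ R) = (Fintype.card N.V : Cardinal) := by
    rw [rank_finsupp_self', Cardinal.mk_fintype]
  have h5 : (Fintype.card (Module.Free.ChooseBasisIndex R (N.Upsilon ⧸ T)) : Cardinal)
      = Module.rank R (N.Upsilon ⧸ T) := by
    rw [← Cardinal.mk_fintype]
    exact (Module.Free.chooseBasis R (N.Upsilon ⧸ T)).mk_eq_rank''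
  have hC : (Fintype.card (Module.Free.ChooseBasisIndex R (N.Upsilon ⧸ T)) : Cardinal)
      + (Fintype.card ↥N.interior : Cardinal)
      = (Fintype.card N.V : Cardinal) := by
    rw [h5, h1, ← h3, ← h4]
    exact h2
  have hCnat : Fintype.card (Module.Free.ChooseBasisIndex R (N.Upsilon ⧸ T))
      + Fintype.card ↥N.interior = Fintype.card N.V := by
    exact_mod_cast hC
  have hint : Fintype.card ↥N.interior + Fintype.card ↥N.boundary = Fintype.card N.V := by
    have h6 : Fintype.card ↥(N.boundaryᶜ) + Fintype.card ↥N.boundary = Fintype.card N.V := by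
      rw [Fintype.card_compl_set]
      have hle : Fintype.card ↥N.boundary ≤ Fintype.card N.V :=
        Fintype.card_le_of_injective _ Subtype.val_injective
      omega
    have h7 : Fintype.card ↥N.interior = Fintype.card ↥(N.boundaryᶜ) :=
      Fintype.card_congr (Equiv.cast rfl)
    omega
  have hb : Fintype.card (Module.Free.ChooseBasisIndex R (N.Upsilon ⧸ T))
      = Nat.card ↥N.boundary := by
    rw [Nat.card_eq_fintype_card]
    omega
  have ePfin : (N.Upsilon ⧸ T) ≃ₗ[R] (Fin (Nat.card ↥N.boundary) → R) :=
    ((Module.Free.chooseBasis R (N.Upsilon ⧸ T)).reindex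
      (Fintype.equivFinOfCardEq hb)).equivFun
  exact ⟨e2.trans (ePfin.prodCongr e1.symm)⟩
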